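/- Consider a repetitive process y_k = G u_k + w + d_k with G ∈ ℝ^{m×n}, w, r ∈ ℝ^m, and disturbances d_k ∈ D, where D ⊆ ℝ^m is bounded. Let M ∈ ℝ^{m×n}, Q ∈ ℝ^{m×m} symmetric positive semidefinite, R ∈ ℝ^{n×n} symmetric positive semidefinite, define H = GᵀQG + R, f = GᵀQ(w − r), H̃ = MᵀQG + R, f̃ = MᵀQ(w − r), F̃(u) = H̃u + f̃, and let W ∈ ℝ^{n×n} be symmetric positive definite. Suppose μ̃ > 0 and L̃ > 0 satisfy μ̃‖d‖_W² ≤ dᵀH̃d and ‖W^{-1}H̃d‖_W ≤ L̃‖d‖_W for all d ∈ ℝ^n, and α ∈ (0, 2μ̃/L̃²). Let X ⊆ ℝ^n be a nonempty closed convex set, let ū ∈ X satisfy ⟨F̃(ū), v − ū⟩ ≥ 0 for all v ∈ X, let u* ∈ X satisfy ⟨Hu* + f, v − u*⟩ ≥ 0 for all v ∈ X, and generate iterates by u_0 ∈ X and u_{k+1} = the W-weighted projection onto X of u_k − αW^{-1}(F̃(u_k) + MᵀQ d_k). Then for all k ≥ 0, ‖u_k − u*‖_W ≤ η^k‖u_0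 − ū‖_W + γ · sup_{j≥0}‖d_j‖ + δ, where η = √(1 − 2αμ̃ + α²L̃²) ∈ [0,1), γ = α‖W^{-1/2}MᵀQ‖/(1 − η), and δ = (1/μ̃)‖W^{-1/2}(G − M)ᵀQ(Gu* + w − r)‖. -/

import Mathlib

open Matrix Finset

/-- Weighted inner product ⟨x,y⟩_W = xᵀWy. -/
noncomputable def wip {n : ℕ} (W : Matrix (Fin n) (Fin n) ℝ) (x y : Fin n → ℝ) : ℝ :=
  x ⬝ᵥ W.mulVec y

/-- Weighted norm ‖x‖_W = √(xᵀWx). -/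
noncomputable def wnorm {n : ℕ} (W : Matrix (Fin n) (Fin n) ℝ) (x : Fin n → ℝ) : ℝ :=
  Real.sqrt (x ⬝ᵥ W.mulVec x)

/-- Euclidean norm ‖x‖ = √(xᵀx). -/
noncomputable def enorm' {n : ℕ} (x : Fin n → ℝ) : ℝ := Real.sqrt (x ⬝ᵥ x)

/-- Operator 2-norm of a matrix. -/
noncomputable def opNorm {m n : ℕ} (A : Matrix (Fin m) (Fin n) ℝ) : ℝ :=
  ‖LinearMap.toContinuousLinearMap (Matrix.toEuclideanLin A)‖

lemma dot_self_nonneg' {n : ℕ} (x : Fin n → ℝ) : 0 ≤ x ⬝ᵥ x :=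
  Finset.sum_nonneg fun i _ => mul_self_nonneg (x i)

lemma enorm'_eq_norm {n : ℕ} (x : Fin n → ℝ) :
    enorm' x = ‖((WithLp.equiv 2 (Fin n → ℝ)).symm x : EuclideanSpace ℝ (Fin n))‖ := by
  rw [EuclideanSpace.norm_eq]
  unfold enorm' dotProduct
  congr 1
  refine Finset.sum_congr rfl fun i _ => ?_
  rw [WithLp.equiv_symm_apply, PiLp.toLp_apply, Real.norm_eq_abs, sq_abs, sq]

lemma enorm'_nonneg {n : ℕ} (x : Fin n → ℝ) : 0 ≤ enorm' x := Real.sqrt_nonneg _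

lemma enorm'_add_le {n : ℕ} (x y : Fin n → ℝ) : enorm' (x + y) ≤ enorm' x + enorm' y := by
  simp only [enorm'_eq_norm]
  have : ((WithLp.equiv 2 (Fin n → ℝ)).symm (x + y) : EuclideanSpace ℝ (Fin n))
      = (WithLp.equiv 2 (Fin n → ℝ)).symm x + (WithLp.equiv 2 (Fin n → ℝ)).symm y := rfl
  rw [this]
  exact norm_add_le _ _

lemma dot_le_enorm' {n : ℕ} (x y : Fin n → ℝ) : x ⬝ᵥ y ≤ enorm' x * enorm' y := by
  have h : x ⬝ᵥ y = inner ℝ ((WithLp.equiv 2 (Fin n → ℝ)).symm x : EuclideanSpace ℝ (Fin n))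
      ((WithLp.equiv 2 (Fin n → ℝ)).symm y) := by
    simp [PiLp.inner_apply, dotProduct, mul_comm]
  rw [h, enorm'_eq_norm, enorm'_eq_norm]
  exact real_inner_le_norm _ _

lemma enorm'_mulVec_le {m n : ℕ} (A : Matrix (Fin m) (Fin n) ℝ) (x : Fin n → ℝ) :
    enorm' (A.mulVec x) ≤ opNorm A * enorm' x := by
  rw [enorm'_eq_norm, enorm'_eq_norm]
  have h : ((WithLp.equiv 2 (Fin m → ℝ)).symm (A.mulVec x) : EuclideanSpace ℝ (Fin m))
      = (LinearMap.toContinuousLinearMap (Matrix.toEuclideanLin A))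
        ((WithLp.equiv 2 (Fin n → ℝ)).symm x) := rfl
  rw [h]
  exact (LinearMap.toContinuousLinearMap (Matrix.toEuclideanLin A)).le_opNorm _

lemma aux_scalar (B C : ℝ) (hC : 0 ≤ C) (h : ∀ t : ℝ, 0 < t → t ≤ 1 → 0 ≤ 2 * B + t * C) :
    0 ≤ B := by
  by_contra hB
  push_neg at hB
  rcases eq_or_lt_of_le hC with hC0 | hC0
  · have := h 1 one_pos le_rfl; nlinarith
  · have ht0 : 0 < min 1 (-B / C) := lt_min one_pos (div_pos (by linarith) hC0)
    have h1 := h _ ht0 (min_le_left _ _)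
    have h2 : min 1 (-B / C) * C ≤ (-B / C) * C :=
      mul_le_mul_of_nonneg_right (min_le_right _ _) hC
    have h3 : (-B / C) * C = -B := by field_simp
    nlinarith

section W
variable {n : ℕ} {W S : Matrix (Fin n) (Fin n) ℝ}

lemma transpose_eq_of_posdef (hS : S.PosDef) : Sᵀ = S := by
  have := hS.isHermitian.eq
  simpa using this

lemma wdot_eq (hS : S.PosDef) (hSsq : S * S = W) (x y : Fin n → ℝ) :
    x ⬝ᵥ W.mulVec y = (S.mulVec x) ⬝ᵥ (S.mulVec y) := by
  rw [← hSsq, ← Matrix.mulVec_mulVec, Matrix.dotProduct_mulVec,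
    ← transpose_eq_of_posdef hS, Matrix.vecMul_transpose, transpose_eq_of_posdef hS]

lemma wnorm_eq (hS : S.PosDef) (hSsq : S * S = W) (x : Fin n → ℝ) :
    wnorm W x = enorm' (S.mulVec x) := by
  rw [wnorm, wdot_eq hS hSsq]; rfl

lemma wdot_self_nonneg (hS : S.PosDef) (hSsq : S * S = W) (x : Fin n → ℝ) :
    0 ≤ x ⬝ᵥ W.mulVec x := by
  rw [wdot_eq hS hSsq]; exact dot_self_nonneg' _

lemma wnorm_nonneg' {W : Matrix (Fin n) (Fin n) ℝ} (x : Fin n → ℝ) : 0 ≤ wnorm W x :=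
  Real.sqrt_nonneg _

lemma wnorm_sq (hS : S.PosDef) (hSsq : S * S = W) (x : Fin n → ℝ) :
    wnorm W x ^ 2 = x ⬝ᵥ W.mulVec x :=
  Real.sq_sqrt (wdot_self_nonneg hS hSsq x)

lemma wdot_le (hS : S.PosDef) (hSsq : S * S = W) (x y : Fin n → ℝ) :
    x ⬝ᵥ W.mulVec y ≤ wnorm W x * wnorm W y := by
  rw [wdot_eq hS hSsq, wnorm_eq hS hSsq, wnorm_eq hS hSsq]
  exact dot_le_enorm' _ _

lemma wdot_comm (hS : S.PosDef) (hSsq : S * S = W) (x y : Fin n → ℝ) :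
    x ⬝ᵥ W.mulVec y = y ⬝ᵥ W.mulVec x := by
  rw [wdot_eq hS hSsq, wdot_eq hS hSsq, dotProduct_comm]

lemma wnorm_add_le (hS : S.PosDef) (hSsq : S * S = W) (x y : Fin n → ℝ) :
    wnorm W (x + y) ≤ wnorm W x + wnorm W y := by
  rw [wnorm_eq hS hSsq, wnorm_eq hS hSsq, wnorm_eq hS hSsq, Matrix.mulVec_add]
  exact enorm'_add_le _ _

lemma wnorm_smul (hS : S.PosDef) (hSsq : S * S = W) (c : ℝ) (x : Fin n → ℝ) :
    wnorm W (c • x) = |c| * wnorm W x := by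
  rw [wnorm, wnorm]
  have h : (c • x) ⬝ᵥ W.mulVec (c • x) = c ^ 2 * (x ⬝ᵥ W.mulVec x) := by
    rw [Matrix.mulVec_smul]
    simp only [smul_dotProduct, dotProduct_smul, smul_eq_mul]
    ring
  rw [h, Real.sqrt_mul (sq_nonneg c), Real.sqrt_sq_eq_abs]

lemma proj_vi (hS : S.PosDef) (hSsq : S * S = W)
    {X : Set (Fin n → ℝ)} (hXconv : Convex ℝ X)
    {x p : Fin n → ℝ} (hp : p ∈ X)
    (hmin : ∀ v ∈ X, wnorm W (p - x) ≤ wnorm W (v - x))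
    {v : Fin n → ℝ} (hv : v ∈ X) :
    (x - p) ⬝ᵥ W.mulVec (v - p) ≤ 0 := by
  have key : 0 ≤ (p - x) ⬝ᵥ W.mulVec (v - p) := by
    apply aux_scalar _ _ (wdot_self_nonneg hS hSsq (v - p))
    intro t ht0 ht1
    have hmem : p + t • (v - p) ∈ X := by
      have h := hXconv hp hv (by linarith : (0:ℝ) ≤ 1 - t) ht0.le (by ring)
      have heq : (1 - t) • p + t • v = p + t • (v - p) := by module
      rwa [heq] at h
    have hle := hmin _ hmem
    have hab : p + t • (v - p) - x = (p - x) + t • (v - p) := by module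
    rw [hab] at hle
    unfold wnorm at hle
    have hsq : (p - x) ⬝ᵥ W.mulVec (p - x)
        ≤ ((p - x) + t • (v - p)) ⬝ᵥ W.mulVec ((p - x) + t • (v - p)) := by
      have h1 := Real.sqrt_nonneg ((p - x) ⬝ᵥ W.mulVec (p - x))
      have h2 := mul_self_le_mul_self h1 hle
      rwa [Real.mul_self_sqrt (wdot_self_nonneg hS hSsq _),
        Real.mul_self_sqrt (wdot_self_nonneg hS hSsq _)] at h2
    have expand : ((p - x) + t • (v - p)) ⬝ᵥ W.mulVec ((p - x) + t • (v - p))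
        = (p - x) ⬝ᵥ W.mulVec (p - x) + 2 * t * ((p - x) ⬝ᵥ W.mulVec (v - p))
          + t ^ 2 * ((v - p) ⬝ᵥ W.mulVec (v - p)) := by
      have hc := wdot_comm hS hSsq (v - p) (p - x)
      simp only [Matrix.mulVec_add, Matrix.mulVec_smul, dotProduct_add, add_dotProduct,
        dotProduct_smul, smul_dotProduct, smul_eq_mul]
      linear_combination t * hc
    rw [expand] at hsq
    have ht : 0 ≤ t * (2 * ((p - x) ⬝ᵥ W.mulVec (v - p))
        + t * ((v - p) ⬝ᵥ W.mulVec (v - p))) := by nlinarith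
    nlinarith
  have hneg : x - p = -(p - x) := by abel
  rw [hneg, neg_dotProduct]
  linarith
end W

set_option maxHeartbeats 1000000 in
/-- Theorem 2, first part: for the closed-loop ILC system
y_k = Gu_k + w + d_k, u_{k+1} = Π_X^W[u_k − αW⁻¹(F̃(u_k) + MᵀQd_k)], with
H = GᵀQG + R, f = GᵀQ(w − r), H̃ = MᵀQG + R, f̃ = MᵀQ(w − r), the iterates satisfy
‖u_k − u*‖_W ≤ ηᵏ‖u_0 − ū‖_W + γ sup_j ‖d_j‖ + δ, where ū solves the VI for (H̃, f̃),
u* solves the VI for (H, f), η = √(1 − 2αμ̃ + α²L̃²) ∈ [0,1),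
γ = α‖W^{-1/2}MᵀQ‖/(1 − η), and δ = (1/μ̃)‖W^{-1/2}(G − M)ᵀQ(Gu* + w − r)‖.
S is the symmetric positive definite square root of W. -/
theorem closed_loop_tracking_bound {n m : ℕ}
    (G : Matrix (Fin m) (Fin n) ℝ) (w r : Fin m → ℝ)
    (D : Set (Fin m → ℝ)) (hD : Bornology.IsBounded D)
    (M : Matrix (Fin m) (Fin n) ℝ)
    (Q : Matrix (Fin m) (Fin m) ℝ) (hQ : Q.PosSemidef)
    (R : Matrix (Fin n) (Fin n) ℝ) (hR : R.PosSemidef)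
    (W : Matrix (Fin n) (Fin n) ℝ) (hW : W.PosDef)
    (S : Matrix (Fin n) (Fin n) ℝ) (hS : S.PosDef) (hSsq : S * S = W)
    (μt Lt : ℝ) (hμ : 0 < μt) (hL : 0 < Lt)
    (hmono : ∀ d : Fin n → ℝ, μt * (wnorm W d) ^ 2 ≤ d ⬝ᵥ (Mᵀ * Q * G + R).mulVec d)
    (hlip : ∀ d : Fin n → ℝ,
      wnorm W (W⁻¹.mulVec ((Mᵀ * Q * G + R).mulVec d)) ≤ Lt * wnorm W d)
    (α : ℝ) (hα : α ∈ Set.Ioo 0 (2 * μt / Lt ^ 2))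
    (X : Set (Fin n → ℝ)) (hXne : X.Nonempty) (hXcl : IsClosed X) (hXconv : Convex ℝ X)
    (ubar ustar : Fin n → ℝ) (hubar : ubar ∈ X) (hustar : ustar ∈ X)
    (hVIbar : ∀ v ∈ X,
      0 ≤ ((Mᵀ * Q * G + R).mulVec ubar + (Mᵀ * Q).mulVec (w - r)) ⬝ᵥ (v - ubar))
    (hVIstar : ∀ v ∈ X,
      0 ≤ ((Gᵀ * Q * G + R).mulVec ustar + (Gᵀ * Q).mulVec (w - r)) ⬝ᵥ (v - ustar))
    (d : ℕ → Fin m → ℝ) (hd : ∀ k, d k ∈ D)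
    (u : ℕ → Fin n → ℝ) (hu0 : u 0 ∈ X)
    (hproj : ∀ k, u (k + 1) ∈ X ∧ ∀ v ∈ X,
      wnorm W (u (k + 1) - (u k - α • W⁻¹.mulVec
          (((Mᵀ * Q * G + R).mulVec (u k) + (Mᵀ * Q).mulVec (w - r))
            + (Mᵀ * Q).mulVec (d k))))
        ≤ wnorm W (v - (u k - α • W⁻¹.mulVec
          (((Mᵀ * Q * G + R).mulVec (u k) + (Mᵀ * Q).mulVec (w - r))
            + (Mᵀ * Q).mulVec (d k))))) :
    0 ≤ Real.sqrt (1 - 2 * α * μt + α ^ 2 * Lt ^ 2) ∧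
    Real.sqrt (1 - 2 * α * μt + α ^ 2 * Lt ^ 2) < 1 ∧
    ∀ k : ℕ,
      wnorm W (u k - ustar)
        ≤ (Real.sqrt (1 - 2 * α * μt + α ^ 2 * Lt ^ 2)) ^ k * wnorm W (u 0 - ubar)
          + (α * opNorm (S⁻¹ * (Mᵀ * Q)) / (1 - Real.sqrt (1 - 2 * α * μt + α ^ 2 * Lt ^ 2)))
            * (⨆ j : ℕ, enorm' (d j))
          + (1 / μt) * enorm' ((S⁻¹ * (G - M)ᵀ * Q).mulVec (G.mulVec ustar + w - r)) := by
  obtain ⟨hα0, hα2⟩ := hα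
  set η : ℝ := Real.sqrt (1 - 2 * α * μt + α ^ 2 * Lt ^ 2) with hηdef
  have hη0 : 0 ≤ η := Real.sqrt_nonneg _
  have hη1 : η < 1 := by
    rw [hηdef, Real.sqrt_lt' one_pos]
    have hLt2 : (0:ℝ) < Lt ^ 2 := by positivity
    have h1 : α * Lt ^ 2 < 2 * μt := by
      have := (lt_div_iff₀ hLt2).mp hα2
      linarith
    nlinarith
  refine ⟨hη0, hη1, ?_⟩
  have h1η : 0 < 1 - η := by linarith
  -- invertibility facts
  have hWdet : IsUnit W.det := hW.det_pos.ne'.isUnit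
  have hSdet : IsUnit S.det := hS.det_pos.ne'.isUnit
  have hWinv : ∀ z : Fin n → ℝ, W.mulVec (W⁻¹.mulVec z) = z := by
    intro z
    rw [Matrix.mulVec_mulVec, Matrix.mul_nonsing_inv _ hWdet, Matrix.one_mulVec]
  have hWT : Wᵀ = W := transpose_eq_of_posdef hW
  have hST : Sᵀ = S := transpose_eq_of_posdef hS
  have winv_dot : ∀ g v : Fin n → ℝ, (W⁻¹.mulVec g) ⬝ᵥ W.mulVec v = g ⬝ᵥ v := by
    intro g v
    rw [Matrix.dotProduct_mulVec, ← hWT, Matrix.vecMul_transpose, hWT, hWinv]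
  have hSWinv : S * W⁻¹ = S⁻¹ := by
    rw [← hSsq, Matrix.mul_inv_rev, ← Matrix.mul_assoc,
      Matrix.mul_nonsing_inv _ hSdet, Matrix.one_mul]
  have sinv_dot : ∀ (z e : Fin n → ℝ), z ⬝ᵥ e = (S⁻¹.mulVec z) ⬝ᵥ (S.mulVec e) := by
    intro z e
    conv_lhs => rw [show e = S⁻¹.mulVec (S.mulVec e) by
      rw [Matrix.mulVec_mulVec, Matrix.nonsing_inv_mul _ hSdet, Matrix.one_mulVec]]
    rw [Matrix.dotProduct_mulVec]
    congr 1
    rw [← Matrix.mulVec_transpose, Matrix.transpose_nonsing_inv, hST]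
  -- bound on disturbances
  set Dsup : ℝ := ⨆ j : ℕ, enorm' (d j) with hDsupdef
  have hbdd : BddAbove (Set.range fun j => enorm' (d j)) := by
    obtain ⟨C, hC⟩ := hD.exists_norm_le
    refine ⟨Real.sqrt m * C, ?_⟩
    rintro _ ⟨j, rfl⟩
    have hnorm : enorm' (d j) ≤ Real.sqrt m * ‖d j‖ := by
      have hsum : (d j) ⬝ᵥ (d j) ≤ (m : ℝ) * ‖d j‖ ^ 2 := by
        unfold dotProduct
        calc ∑ i, d j i * d j i ≤ ∑ _i : Fin m, ‖d j‖ ^ 2 := by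
              refine Finset.sum_le_sum fun i _ => ?_
              have h := norm_le_pi_norm (d j) i
              have h2 : |d j i| ≤ ‖d j‖ := by simpa using h
              nlinarith [abs_nonneg (d j i), le_abs_self (d j i), neg_abs_le (d j i)]
          _ = (m : ℝ) * ‖d j‖ ^ 2 := by
              rw [Finset.sum_const, Finset.card_univ, Fintype.card_fin, nsmul_eq_mul]
      calc enorm' (d j) = Real.sqrt ((d j) ⬝ᵥ (d j)) := rfl
        _ ≤ Real.sqrt ((m : ℝ) * ‖d j‖ ^ 2) := Real.sqrt_le_sqrt hsum
        _ = Real.sqrt m * ‖d j‖ := by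
            rw [Real.sqrt_mul (Nat.cast_nonneg m), Real.sqrt_sq (norm_nonneg _)]
    calc enorm' (d j) ≤ Real.sqrt m * ‖d j‖ := hnorm
      _ ≤ Real.sqrt m * C := by
          have := hC (d j) (hd j)
          have hm : (0:ℝ) ≤ Real.sqrt m := Real.sqrt_nonneg _
          nlinarith [norm_nonneg (d j)]
  have hDle : ∀ j, enorm' (d j) ≤ Dsup := fun j => le_ciSup hbdd j
  have hDsup0 : 0 ≤ Dsup := le_trans (enorm'_nonneg (d 0)) (hDle 0)
  -- abbreviations
  set Ht : Matrix (Fin n) (Fin n) ℝ := Mᵀ * Q * G + R with hHtdef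
  set K : ℝ := opNorm (S⁻¹ * (Mᵀ * Q)) with hKdef
  have hK0 : 0 ≤ K := norm_nonneg _
  -- contraction
  have hcontr : ∀ e : Fin n → ℝ,
      wnorm W (e - α • W⁻¹.mulVec (Ht.mulVec e)) ≤ η * wnorm W e := by
    intro e
    set g : Fin n → ℝ := W⁻¹.mulVec (Ht.mulVec e) with hgdef
    have hWg : e ⬝ᵥ W.mulVec g = e ⬝ᵥ Ht.mulVec e := by rw [hgdef, hWinv]
    have hm := hmono e
    have hg := hlip e
    have hgsq : g ⬝ᵥ W.mulVec g ≤ Lt ^ 2 * wnorm W e ^ 2 := by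
      have h2 := pow_le_pow_left₀ (wnorm_nonneg' g) hg 2
      rw [wnorm_sq hS hSsq] at h2
      calc g ⬝ᵥ W.mulVec g ≤ (Lt * wnorm W e) ^ 2 := h2
        _ = Lt ^ 2 * wnorm W e ^ 2 := by ring
    have hexp : (e - α • g) ⬝ᵥ W.mulVec (e - α • g)
        = e ⬝ᵥ W.mulVec e - 2 * α * (e ⬝ᵥ W.mulVec g) + α ^ 2 * (g ⬝ᵥ W.mulVec g) := by
      have hc := wdot_comm hS hSsq g e
      simp only [Matrix.mulVec_sub, Matrix.mulVec_smul, dotProduct_sub, sub_dotProduct,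
        dotProduct_smul, smul_dotProduct, smul_eq_mul]
      linear_combination (-α) * hc
    have hq : (e - α • g) ⬝ᵥ W.mulVec (e - α • g)
        ≤ (1 - 2 * α * μt + α ^ 2 * Lt ^ 2) * wnorm W e ^ 2 := by
      rw [hexp, hWg]
      have hs : e ⬝ᵥ W.mulVec e = wnorm W e ^ 2 := (wnorm_sq hS hSsq e).symm
      nlinarith [sq_nonneg α]
    calc wnorm W (e - α • g) = Real.sqrt ((e - α • g) ⬝ᵥ W.mulVec (e - α • g)) := rfl
      _ ≤ Real.sqrt ((1 - 2 * α * μt + α ^ 2 * Lt ^ 2) * wnorm W e ^ 2) :=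
          Real.sqrt_le_sqrt hq
      _ = η * wnorm W e := by
          rw [Real.sqrt_mul' _ (sq_nonneg (wnorm W e)), Real.sqrt_sq (wnorm_nonneg' e), hηdef]
  -- per-step bound
  have hstep : ∀ k, wnorm W (u (k + 1) - ubar)
      ≤ η * wnorm W (u k - ubar) + α * K * Dsup := by
    intro k
    obtain ⟨hpX, hmin⟩ := hproj k
    set xk : Fin n → ℝ := u k - α • W⁻¹.mulVec
      ((Ht.mulVec (u k) + (Mᵀ * Q).mulVec (w - r)) + (Mᵀ * Q).mulVec (d k)) with hxkdef
    set p : Fin n → ℝ := u (k + 1) with hpdef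
    set y : Fin n → ℝ := ubar - α • W⁻¹.mulVec (Ht.mulVec ubar + (Mᵀ * Q).mulVec (w - r))
      with hydef
    have hVI1 : (xk - p) ⬝ᵥ W.mulVec (ubar - p) ≤ 0 :=
      proj_vi hS hSsq hXconv hpX hmin hubar
    have hVI2 : (y - ubar) ⬝ᵥ W.mulVec (p - ubar) ≤ 0 := by
      have hyub : y - ubar = (-α) • W⁻¹.mulVec (Ht.mulVec ubar + (Mᵀ * Q).mulVec (w - r)) := by
        rw [hydef]; module
      rw [hyub, smul_dotProduct, smul_eq_mul]
      have := hVIbar p hpX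
      have hwd := winv_dot (Ht.mulVec ubar + (Mᵀ * Q).mulVec (w - r)) (p - ubar)
      rw [hwd]
      nlinarith
    -- nonexpansiveness step
    have hB : wnorm W (p - ubar) ≤ wnorm W (xk - y) := by
      set B : ℝ := wnorm W (p - ubar) with hBdef
      set N : ℝ := wnorm W (xk - y) with hNdef
      have hB0 : 0 ≤ B := wnorm_nonneg' _
      have hN0 : 0 ≤ N := wnorm_nonneg' _
      have hBsq : B ^ 2 ≤ N * B := by
        have hdecomp : p - ubar = (p - xk) + (xk - y) + (y - ubar) := by module
        have hsplit : (p - ubar) ⬝ᵥ W.mulVec (p - ubar)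
            = (p - xk) ⬝ᵥ W.mulVec (p - ubar) + (xk - y) ⬝ᵥ W.mulVec (p - ubar)
              + (y - ubar) ⬝ᵥ W.mulVec (p - ubar) := by
          nth_rewrite 1 [hdecomp]
          simp only [add_dotProduct]
        have ht1 : (p - xk) ⬝ᵥ W.mulVec (p - ubar) = (xk - p) ⬝ᵥ W.mulVec (ubar - p) := by
          rw [show p - xk = -(xk - p) by abel, show p - ubar = -(ubar - p) by abel,
            neg_dotProduct, Matrix.mulVec_neg, dotProduct_neg, neg_neg]
        have ht2 : (xk - y) ⬝ᵥ W.mulVec (p - ubar) ≤ N * B :=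
          wdot_le hS hSsq (xk - y) (p - ubar)
        have hBsq' : B ^ 2 = (p - ubar) ⬝ᵥ W.mulVec (p - ubar) := wnorm_sq hS hSsq _
        rw [hBsq', hsplit, ht1]
        linarith
      rcases le_or_gt B N with h | h
      · exact h
      · exfalso
        have hBpos : 0 < B := lt_of_le_of_lt hN0 h
        nlinarith
    -- decompose xk - y
    have hxy : xk - y = ((u k - ubar) - α • W⁻¹.mulVec (Ht.mulVec (u k - ubar)))
        + (-α) • W⁻¹.mulVec ((Mᵀ * Q).mulVec (d k)) := by
      rw [hxkdef, hydef]
      simp only [Matrix.mulVec_add, Matrix.mulVec_sub]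
      module
    have hterm2 : wnorm W ((-α) • W⁻¹.mulVec ((Mᵀ * Q).mulVec (d k))) ≤ α * K * Dsup := by
      rw [wnorm_smul hS hSsq, abs_neg, abs_of_pos hα0]
      have heq : wnorm W (W⁻¹.mulVec ((Mᵀ * Q).mulVec (d k)))
          = enorm' ((S⁻¹ * (Mᵀ * Q)).mulVec (d k)) := by
        rw [wnorm_eq hS hSsq, Matrix.mulVec_mulVec, hSWinv, Matrix.mulVec_mulVec]
      rw [heq]
      calc α * enorm' ((S⁻¹ * (Mᵀ * Q)).mulVec (d k))
          ≤ α * (K * enorm' (d k)) := by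
            have := enorm'_mulVec_le (S⁻¹ * (Mᵀ * Q)) (d k)
            nlinarith
        _ ≤ α * (K * Dsup) := by
            have h1 : K * enorm' (d k) ≤ K * Dsup := mul_le_mul_of_nonneg_left (hDle k) hK0
            exact mul_le_mul_of_nonneg_left h1 hα0.le
        _ = α * K * Dsup := by ring
    calc wnorm W (u (k + 1) - ubar) = wnorm W (p - ubar) := rfl
      _ ≤ wnorm W (xk - y) := hB
      _ ≤ wnorm W ((u k - ubar) - α • W⁻¹.mulVec (Ht.mulVec (u k - ubar)))
            + wnorm W ((-α) • W⁻¹.mulVec ((Mᵀ * Q).mulVec (d k))) := by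
          rw [hxy]; exact wnorm_add_le hS hSsq _ _
      _ ≤ η * wnorm W (u k - ubar) + α * K * Dsup := by
          have := hcontr (u k - ubar)
          linarith
  -- geometric recursion
  set a0 : ℝ := wnorm W (u 0 - ubar) with ha0def
  set c : ℝ := α * K * Dsup with hcdef
  have hc0 : 0 ≤ c := by positivity
  have hgeom : ∀ k, wnorm W (u k - ubar) ≤ η ^ k * a0 + c * ∑ i ∈ range k, η ^ i := by
    intro k
    induction k with
    | zero => simp [ha0def]
    | succ k ih =>
      calc wnorm W (u (k + 1) - ubar) ≤ η * wnorm W (u k - ubar) + c := hstep k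
        _ ≤ η * (η ^ k * a0 + c * ∑ i ∈ range k, η ^ i) + c := by
            nlinarith [mul_le_mul_of_nonneg_left ih hη0]
        _ = η ^ (k + 1) * a0 + c * (η * ∑ i ∈ range k, η ^ i + 1) := by ring
        _ = η ^ (k + 1) * a0 + c * ∑ i ∈ range (k + 1), η ^ i := by
            rw [geom_sum_succ]
  have hsum : ∀ k, (∑ i ∈ range k, η ^ i) ≤ 1 / (1 - η) := by
    intro k
    rw [le_div_iff₀ h1η]
    have h := geom_sum_mul η k
    have hηk : 0 ≤ η ^ k := pow_nonneg hη0 k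
    nlinarith
  -- delta bound
  set z : Fin n → ℝ := ((G - M)ᵀ * Q).mulVec (G.mulVec ustar + w - r) with hzdef
  have hdelta : wnorm W (ubar - ustar)
      ≤ (1 / μt) * enorm' ((S⁻¹ * (G - M)ᵀ * Q).mulVec (G.mulVec ustar + w - r)) := by
    set e : Fin n → ℝ := ubar - ustar with hedef
    have h1 := hVIbar ustar hustar
    have h2 := hVIstar ubar hubar
    have hmat : ((Gᵀ * Q * G + R).mulVec ustar + (Gᵀ * Q).mulVec (w - r))
        - (Ht.mulVec ustar + (Mᵀ * Q).mulVec (w - r)) = z := by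
      rw [hzdef, hHtdef]
      simp only [Matrix.transpose_sub, Matrix.sub_mul, Matrix.sub_mulVec,
        Matrix.add_mulVec, Matrix.mulVec_add, Matrix.mulVec_sub, ← Matrix.mulVec_mulVec]
      abel
    have hA : (Ht.mulVec ubar + (Mᵀ * Q).mulVec (w - r)) ⬝ᵥ e ≤ 0 := by
      have hne : ustar - ubar = -e := by rw [hedef]; abel
      rw [hne, dotProduct_neg] at h1
      linarith
    have hC : 0 ≤ ((Gᵀ * Q * G + R).mulVec ustar + (Gᵀ * Q).mulVec (w - r)) ⬝ᵥ e := h2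
    have hsplit1 : e ⬝ᵥ Ht.mulVec e
        = (Ht.mulVec ubar + (Mᵀ * Q).mulVec (w - r)) ⬝ᵥ e
          - (Ht.mulVec ustar + (Mᵀ * Q).mulVec (w - r)) ⬝ᵥ e := by
      rw [dotProduct_comm]
      conv_lhs => rw [hedef, Matrix.mulVec_sub]
      simp only [sub_dotProduct, add_dotProduct]
      ring
    have hsplit2 : z ⬝ᵥ e
        = ((Gᵀ * Q * G + R).mulVec ustar + (Gᵀ * Q).mulVec (w - r)) ⬝ᵥ e
          - (Ht.mulVec ustar + (Mᵀ * Q).mulVec (w - r)) ⬝ᵥ e := by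
      rw [← hmat, sub_dotProduct]
    have hkey : μt * wnorm W e ^ 2 ≤ z ⬝ᵥ e := by
      have hm := hmono e
      linarith
    have hcs : z ⬝ᵥ e ≤ enorm' (S⁻¹.mulVec z) * wnorm W e := by
      rw [sinv_dot z e, wnorm_eq hS hSsq]
      exact dot_le_enorm' _ _
    have hzz : S⁻¹.mulVec z = (S⁻¹ * (G - M)ᵀ * Q).mulVec (G.mulVec ustar + w - r) := by
      rw [hzdef, Matrix.mulVec_mulVec, ← Matrix.mul_assoc]
    rw [← hzz]
    have he0 : 0 ≤ wnorm W e := wnorm_nonneg' _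
    have hE0 : 0 ≤ enorm' (S⁻¹.mulVec z) := enorm'_nonneg _
    rcases eq_or_lt_of_le he0 with he | he
    · rw [← he]; positivity
    · have h6 : μt * wnorm W e ^ 2 ≤ enorm' (S⁻¹.mulVec z) * wnorm W e := le_trans hkey hcs
      have h5 : μt * wnorm W e ≤ enorm' (S⁻¹.mulVec z) := by nlinarith
      rw [show (1 / μt) * enorm' (S⁻¹.mulVec z) = enorm' (S⁻¹.mulVec z) / μt by ring,
        le_div_iff₀ hμ]
      linarith
  -- final assembly
  intro k
  have htri : wnorm W (u k - ustar) ≤ wnorm W (u k - ubar) + wnorm W (ubar - ustar) := by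
    have heq : u k - ustar = (u k - ubar) + (ubar - ustar) := by abel
    rw [heq]
    exact wnorm_add_le hS hSsq _ _
  have hmain : wnorm W (u k - ubar) ≤ η ^ k * a0 + (α * K / (1 - η)) * Dsup := by
    calc wnorm W (u k - ubar) ≤ η ^ k * a0 + c * ∑ i ∈ range k, η ^ i := hgeom k
      _ ≤ η ^ k * a0 + c * (1 / (1 - η)) := by
          have := hsum k
          nlinarith
      _ = η ^ k * a0 + (α * K / (1 - η)) * Dsup := by
          rw [hcdef]; ring
  linarith
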